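/- Let E be a real Hilbert space (a complete real inner product space), f : E → ℝ a C² function, x ∈ E, ε ≥ 0 and μ > 0. Suppose that ‖iteratedFDeriv ℝ 2 f z‖ ≤ μ for every z in the segment from x to x − ε • ∇f(x), where ∇f denotes the gradient of f. Then f(x − ε • ∇f(x)) ≤ f(x) − (ε − (μ/2)·ε²)·‖∇f(x)‖². In particular, if 0 < ε < 2/μ, then f(x − ε • ∇f(x)) ≤ f(x), with equality only if ∇f(x) = 0. -/

import Mathlib

open Set

theorem stmt_2 {E : Type*} [NormedAddCommGroup E] [InnerProductSpace ℝ E] [CompleteSpace E]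
    (f : E → ℝ) (hf : ContDiff ℝ 2 f) (x : E) (ε μ : ℝ) (hε : 0 ≤ ε) (hμ : 0 < μ)
    (hbound : ∀ z ∈ segment ℝ x (x - ε • gradient f x), ‖iteratedFDeriv ℝ 2 f z‖ ≤ μ) :
    f (x - ε • gradient f x) ≤ f x - (ε - μ / 2 * ε ^ 2) * ‖gradient f x‖ ^ 2 ∧
      (0 < ε → ε < 2 / μ →
        f (x - ε • gradient f x) ≤ f x ∧
          (f (x - ε • gradient f x) = f x → gradient f x = 0)) := by
  set g : E := gradient f x with hgdef
  set v : E := -(ε • g) with hvdef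
  have hy : x - ε • g = x + v := by simp [hvdef, sub_eq_add_neg]
  have hdiff : Differentiable ℝ f := hf.differentiable (by norm_num)
  have hdf : Differentiable ℝ (fderiv ℝ f) :=
    (hf.fderiv_right (m := 1) (by norm_num)).differentiable (by norm_num)
  -- membership of the line in the segment
  have hmem : ∀ t : ℝ, t ∈ Icc (0:ℝ) 1 → x + t • v ∈ segment ℝ x (x - ε • g) := by
    intro t ht
    rw [segment_eq_image']
    exact ⟨t, ht, by simp [hy]⟩
  have hline : ∀ t : ℝ, HasDerivAt (fun s : ℝ => x + s • v) v t := by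
    intro t
    simpa using ((hasDerivAt_id t).smul_const v).const_add x
  set φ : ℝ → ℝ := fun t => fderiv ℝ f (x + t • v) v with hφdef
  have hφ : ∀ t : ℝ, HasDerivAt φ (fderiv ℝ (fderiv ℝ f) (x + t • v) v v) t := by
    intro t
    have h1 := ((hdf (x + t • v)).hasFDerivAt.clm_apply
      (hasFDerivAt_const v (x + t • v))).comp_hasDerivAt t (hline t)
    simp only [ContinuousLinearMap.comp_zero, zero_add, ContinuousLinearMap.flip_apply] at h1; exact h1
  have hDbound : ∀ t ∈ Icc (0:ℝ) 1,
      ‖fderiv ℝ (fderiv ℝ f) (x + t • v) v v‖ ≤ μ * ‖v‖ ^ 2 := by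
    intro t ht
    have hb := hbound _ (hmem t ht)
    have heq : fderiv ℝ (fderiv ℝ f) (x + t • v) v v
        = iteratedFDeriv ℝ 2 f (x + t • v) ![v, v] := by
      rw [iteratedFDeriv_two_apply]; simp
    rw [heq]
    calc ‖iteratedFDeriv ℝ 2 f (x + t • v) ![v, v]‖
        ≤ ‖iteratedFDeriv ℝ 2 f (x + t • v)‖ * ∏ i, ‖(![v, v]) i‖ :=
          (iteratedFDeriv ℝ 2 f (x + t • v)).le_opNorm _
      _ ≤ μ * ‖v‖ ^ 2 := by
          rw [Fin.prod_univ_two]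
          simp only [Matrix.cons_val_zero, Matrix.cons_val_one, Matrix.head_cons]
          have : (0:ℝ) ≤ ‖v‖ * ‖v‖ := mul_nonneg (norm_nonneg _) (norm_nonneg _)
          nlinarith [norm_nonneg (iteratedFDeriv ℝ 2 f (x + t • v))]
  -- Lipschitz-type bound on φ over [0,1]
  have hφlip : ∀ t ∈ Icc (0:ℝ) 1, ‖φ t - φ 0‖ ≤ μ * ‖v‖ ^ 2 * (t - 0) := by
    apply norm_image_sub_le_of_norm_deriv_le_segment'
      (f' := fun t => fderiv ℝ (fderiv ℝ f) (x + t • v) v v)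
    · intro t ht; exact (hφ t).hasDerivWithinAt
    · intro t ht; exact hDbound t (Ico_subset_Icc_self ht)
  -- the auxiliary function
  set h : ℝ → ℝ := fun t => f (x + t • v) - f x - t * φ 0 - μ * ‖v‖ ^ 2 * t ^ 2 / 2 with hhdef
  have hh : ∀ t : ℝ, HasDerivAt h (φ t - φ 0 - μ * ‖v‖ ^ 2 * t) t := by
    intro t
    have h1 : HasDerivAt (fun s => f (x + s • v)) (φ t) t := by
      have := (hdiff (x + t • v)).hasFDerivAt.comp_hasDerivAt t (hline t)
      exact this
    have h2 : HasDerivAt (fun s : ℝ => s * φ 0) (φ 0) t := by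
      simpa using (hasDerivAt_id t).mul_const (φ 0)
    have h3 : HasDerivAt (fun s : ℝ => μ * ‖v‖ ^ 2 * s ^ 2 / 2) (μ * ‖v‖ ^ 2 * t) t := by
      have := ((hasDerivAt_pow 2 t).const_mul (μ * ‖v‖ ^ 2)).div_const 2
      convert this using 1
      all_goals first | rfl | ring
    have := ((h1.sub_const (f x)).sub h2).sub h3
    exact this
  have hanti : AntitoneOn h (Icc (0:ℝ) 1) := by
    apply antitoneOn_of_deriv_nonpos (convex_Icc 0 1)
    · exact fun t _ => ((hh t).continuousAt).continuousWithinAt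
    · intro t _
      exact ((hh t).differentiableAt).differentiableWithinAt
    · intro t ht
      rw [interior_Icc] at ht
      rw [(hh t).deriv]
      have := hφlip t ⟨le_of_lt ht.1, le_of_lt ht.2⟩
      rw [Real.norm_eq_abs] at this
      have h4 := abs_le.mp (by simpa using this)
      linarith [h4.2]
  have key : h 1 ≤ h 0 := hanti ⟨le_refl 0, zero_le_one⟩ ⟨zero_le_one, le_refl 1⟩ zero_le_one
  have hphi0 : φ 0 = -(ε * ‖g‖ ^ 2) := by
    have : fderiv ℝ f x v = (inner ℝ g v : ℝ) := by
      rw [hgdef]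
      exact (InnerProductSpace.toDual_symm_apply).symm
    simp only [hφdef, zero_smul, add_zero]
    rw [this, hvdef]
    rw [inner_neg_right, real_inner_smul_right, real_inner_self_eq_norm_sq]
  have hnv : ‖v‖ ^ 2 = ε ^ 2 * ‖g‖ ^ 2 := by
    rw [hvdef, norm_neg, norm_smul, Real.norm_eq_abs, mul_pow, sq_abs]
  have main : f (x - ε • g) ≤ f x - (ε - μ / 2 * ε ^ 2) * ‖g‖ ^ 2 := by
    have h0 : h 0 = 0 := by simp [hhdef]
    have h1 : h 1 = f (x + v) - f x - φ 0 - μ * ‖v‖ ^ 2 / 2 := by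
      simp [hhdef]
    rw [hy]
    rw [h0, h1] at key
    rw [hphi0, hnv] at key
    nlinarith
  refine ⟨main, fun hε0 hε2 => ?_⟩
  have hc : 0 < ε - μ / 2 * ε ^ 2 := by
    have : μ * ε < 2 := by
      rw [lt_div_iff₀ hμ] at hε2
      linarith
    nlinarith
  have hle : f (x - ε • g) ≤ f x := by
    nlinarith [sq_nonneg ‖g‖]
  refine ⟨hle, fun heq => ?_⟩
  have : ‖g‖ ^ 2 ≤ 0 := by nlinarith
  have : ‖g‖ = 0 := by nlinarith [sq_nonneg ‖g‖, norm_nonneg g]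
  exact norm_eq_zero.mp this
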